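/- Let a Euclidean triangle have side lengths d_ij, d_ik, d_jk with all inner angles at least ε > 0, and let d̃ be side lengths with e^{−δ} d ≤ d̃ ≤ e^{δ} d componentwise. Then |cos θ_i − cos θ̃_i| ≤ 3(e^{4δ} − 1)/(2 sin²ε), where θ̃_i is computed from d̃ by the law of cosines. -/
import Mathlib
set_option maxHeartbeats 1000000

-- strict cosine bounds from triangle inequality
lemma cosStrict (a b c : ℝ) (ha : 0 < a) (hb : 0 < b) (hc : 0 < c)
    (t1 : a < b + c) (t2 : b < a + c) (t3 : c < a + b) :
    -1 < (a^2 + b^2 - c^2) / (2*a*b) ∧ (a^2 + b^2 - c^2) / (2*a*b) < 1 := by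
  have hab : 0 < 2*a*b := by positivity
  constructor
  · rw [lt_div_iff₀ hab]
    nlinarith [mul_pos (sub_pos.2 t3) (by linarith : (0:ℝ) < a + b + c)]
  · rw [div_lt_iff₀ hab]
    nlinarith [mul_pos (sub_pos.2 t1) (sub_pos.2 t2)]

lemma sideRatio (a b c u s : ℝ) (ha : 0 < a) (hb : 0 < b) (hc : 0 < c)
    (t1 : a < b + c) (t2 : b < a + c) (t3 : c < a + b)
    (hu0 : 0 ≤ u) (hu1 : u ≤ 1) (hsu : s^2 = 1 - u^2)
    (hA : b^2 + c^2 - a^2 ≤ 2*b*c*u) (hB : a^2 + c^2 - b^2 ≤ 2*a*c*u)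
    (hC : a^2 + b^2 - c^2 ≤ 2*a*b*u) :
    s^2 * c^2 ≤ b^2 := by
  have heron : 0 ≤ 4*a^2*c^2 - (a^2+c^2-b^2)^2 := by
    nlinarith [mul_pos (mul_pos (sub_pos.2 t2) (sub_pos.2 t1))
      (mul_pos (sub_pos.2 t3) (by linarith : (0:ℝ) < a + b + c))]
  have hBlow : -(2*a*c*u) ≤ a^2 + c^2 - b^2 := by
    rcases le_or_gt (b^2 + c^2 - a^2) 0 with h1 | h1
    · rcases le_or_gt (a^2 + b^2 - c^2) 0 with h2 | h2
      · nlinarith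
      · nlinarith [mul_nonpos_of_nonpos_of_nonneg h1 h2.le,
          mul_pos (mul_pos ha hc) (mul_pos hb hb)]
    · rcases le_or_gt (a^2 + b^2 - c^2) 0 with h2 | h2
      · nlinarith [mul_nonpos_of_nonneg_of_nonpos h1.le h2,
          mul_pos (mul_pos ha hc) (mul_pos hb hb)]
      · have hAC : (b^2+c^2-a^2)*(a^2+b^2-c^2) ≤ (2*b*c*u)*(2*a*b*u) :=
          mul_le_mul hA hC h2.le (by positivity)
        nlinarith [mul_pos (mul_pos ha hc) (mul_pos hb hb),
          mul_le_mul_of_nonneg_left hu1 (by positivity : (0:ℝ) ≤ 4*a*b^2*c*u)]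
  have hBsq : (a^2+c^2-b^2)^2 ≤ (2*a*c*u)^2 := by
    nlinarith [mul_nonneg (by linarith : (0:ℝ) ≤ 2*a*c*u - (a^2+c^2-b^2))
      (by linarith : (0:ℝ) ≤ 2*a*c*u + (a^2+c^2-b^2))]
  -- s²c²·4a² = 4a²c²(1−u²) ≤ 4a²c² − B² = 4a²b² − C² ≤ 4a²b²
  have hiden : 4*a^2*c^2 - (a^2+c^2-b^2)^2 = 4*a^2*b^2 - (a^2+b^2-c^2)^2 := by ring
  nlinarith [sq_nonneg (a^2+b^2-c^2), sq_nonneg a, mul_pos ha ha]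

lemma pertBound (x y z tx ty tz E : ℝ) (hx : 0 < x) (hy : 0 < y)
    (htx : 0 < tx) (hty : 0 < ty) (hE : 1 ≤ E)
    (hx2 : x^2 ≤ E*tx^2 ∧ tx^2 ≤ E*x^2) (hy2 : y^2 ≤ E*ty^2 ∧ ty^2 ≤ E*y^2)
    (hz2 : z^2 ≤ E*tz^2 ∧ tz^2 ≤ E*z^2)
    (hxy : x*y ≤ E*(tx*ty) ∧ tx*ty ≤ E*(x*y)) :
    |(x^2+y^2-z^2)/(2*x*y) - (tx^2+ty^2-tz^2)/(2*tx*ty)| ≤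
      (E^2-1)*(x^2+y^2+z^2)/(2*x*y) := by
  have hE0 : (0:ℝ) < E := lt_of_lt_of_le one_pos hE
  have hE1 : (0:ℝ) ≤ E^2 - 1 := by nlinarith
  have hb : (0:ℝ) < 2*x*y := by positivity
  have hD : (0:ℝ) < 2*tx*ty := by positivity
  have hz0 : (0:ℝ) ≤ z^2 := sq_nonneg z
  have f1 : E*(tx^2+ty^2-tz^2) ≤ E^2*(x^2+y^2) - z^2 := by
    nlinarith [mul_le_mul_of_nonneg_left hx2.2 hE0.le,
      mul_le_mul_of_nonneg_left hy2.2 hE0.le, hz2.1]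
  have f2 : x^2+y^2 - E^2*z^2 ≤ E*(tx^2+ty^2-tz^2) := by
    nlinarith [mul_le_mul_of_nonneg_left hz2.2 hE0.le, hx2.1, hy2.1]
  have fEK : E*(tx^2+ty^2-tz^2) ≤ (x^2+y^2-z^2) + (E^2-1)*(x^2+y^2+z^2) := by
    nlinarith [mul_nonneg hE1 hz0]
  have fK' : (x^2+y^2-z^2) - (E^2-1)*(x^2+y^2+z^2) ≤ E*(tx^2+ty^2-tz^2) := by
    nlinarith [mul_nonneg hE1 hz0]
  have f3 : (tx^2+ty^2-tz^2) ≤ E*((x^2+y^2-z^2) + (E^2-1)*(x^2+y^2+z^2)) := by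
    refine le_of_mul_le_mul_left ?_ hE0
    nlinarith [f1, mul_nonneg hE1 (by nlinarith : (0:ℝ) ≤ E^2*(x^2+y^2+z^2) - z^2)]
  have f4 : E*((x^2+y^2-z^2) - (E^2-1)*(x^2+y^2+z^2)) ≤ (tx^2+ty^2-tz^2) := by
    refine le_of_mul_le_mul_left ?_ hE0
    nlinarith [f2, mul_nonneg hE1
      (by nlinarith : (0:ℝ) ≤ E^2*(x^2+y^2+z^2) - (x^2+y^2))]
  have G2 : (tx^2+ty^2-tz^2)*(2*x*y) ≤
      ((x^2+y^2-z^2) + (E^2-1)*(x^2+y^2+z^2))*(2*tx*ty) := by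
    rcases le_or_gt 0 ((x^2+y^2-z^2) + (E^2-1)*(x^2+y^2+z^2)) with hK0 | hK0
    · rcases le_or_gt 0 (tx^2+ty^2-tz^2) with hN0 | hN0
      · have s1 : (tx^2+ty^2-tz^2)*(2*x*y) ≤ (tx^2+ty^2-tz^2)*(E*(2*tx*ty)) :=
          mul_le_mul_of_nonneg_left (by nlinarith [hxy.1]) hN0
        have s2 : (E*(tx^2+ty^2-tz^2))*(2*tx*ty) ≤
            ((x^2+y^2-z^2) + (E^2-1)*(x^2+y^2+z^2))*(2*tx*ty) :=
          mul_le_mul_of_nonneg_right fEK hD.le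
        nlinarith [s1, s2]
      · nlinarith [mul_nonneg hK0 hD.le,
          mul_pos_of_neg_of_neg hN0 (neg_neg_of_pos hb)]
    · have s1 : (tx^2+ty^2-tz^2)*(2*x*y) ≤
          (E*((x^2+y^2-z^2) + (E^2-1)*(x^2+y^2+z^2)))*(2*x*y) :=
        mul_le_mul_of_nonneg_right f3 hb.le
      have s2 : ((x^2+y^2-z^2) + (E^2-1)*(x^2+y^2+z^2))*(E*(2*x*y)) ≤
          ((x^2+y^2-z^2) + (E^2-1)*(x^2+y^2+z^2))*(2*tx*ty) :=
        mul_le_mul_of_nonpos_left (by nlinarith [hxy.2]) hK0.le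
      nlinarith [s1, s2]
  have G1 : ((x^2+y^2-z^2) - (E^2-1)*(x^2+y^2+z^2))*(2*tx*ty) ≤
      (tx^2+ty^2-tz^2)*(2*x*y) := by
    rcases le_or_gt ((x^2+y^2-z^2) - (E^2-1)*(x^2+y^2+z^2)) 0 with hK0 | hK0
    · rcases le_or_gt 0 (tx^2+ty^2-tz^2) with hN0 | hN0
      · nlinarith [mul_nonneg hN0 hb.le, mul_nonpos_of_nonpos_of_nonneg hK0 hD.le]
      · have s1 : ((x^2+y^2-z^2) - (E^2-1)*(x^2+y^2+z^2))*(2*tx*ty) ≤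
            (E*(tx^2+ty^2-tz^2))*(2*tx*ty) :=
          mul_le_mul_of_nonneg_right fK' hD.le
        have s2 : (tx^2+ty^2-tz^2)*(E*(2*tx*ty)) ≤ (tx^2+ty^2-tz^2)*(2*x*y) :=
          mul_le_mul_of_nonpos_left (by nlinarith [hxy.1]) hN0.le
        nlinarith [s1, s2]
    · have s1 : ((x^2+y^2-z^2) - (E^2-1)*(x^2+y^2+z^2))*(2*tx*ty) ≤
          ((x^2+y^2-z^2) - (E^2-1)*(x^2+y^2+z^2))*(E*(2*x*y)) :=
        mul_le_mul_of_nonneg_left (by nlinarith [hxy.2]) hK0.le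
      have s2 : (E*((x^2+y^2-z^2) - (E^2-1)*(x^2+y^2+z^2)))*(2*x*y) ≤
          (tx^2+ty^2-tz^2)*(2*x*y) :=
        mul_le_mul_of_nonneg_right f4 hb.le
      nlinarith [s1, s2]
  have key1 : ((x^2+y^2-z^2) - (E^2-1)*(x^2+y^2+z^2))/(2*x*y) ≤
      (tx^2+ty^2-tz^2)/(2*tx*ty) := by
    rw [div_le_div_iff₀ hb hD]; exact G1
  have key2 : (tx^2+ty^2-tz^2)/(2*tx*ty) ≤
      ((x^2+y^2-z^2) + (E^2-1)*(x^2+y^2+z^2))/(2*x*y) := by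
    rw [div_le_div_iff₀ hD hb]; exact G2
  rw [abs_sub_le_iff]
  constructor
  · have e : ((x^2+y^2-z^2) - (E^2-1)*(x^2+y^2+z^2))/(2*x*y) =
        (x^2+y^2-z^2)/(2*x*y) - (E^2-1)*(x^2+y^2+z^2)/(2*x*y) := by ring
    rw [e] at key1; linarith
  · have e : ((x^2+y^2-z^2) + (E^2-1)*(x^2+y^2+z^2))/(2*x*y) =
        (x^2+y^2-z^2)/(2*x*y) + (E^2-1)*(x^2+y^2+z^2)/(2*x*y) := by ring
    rw [e] at key2; linarith

lemma expSqBound (d t δ : ℝ) (hd : 0 < d) (h1 : Real.exp (-δ) * d ≤ t)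
    (h2 : t ≤ Real.exp δ * d) :
    d^2 ≤ Real.exp (2*δ) * t^2 ∧ t^2 ≤ Real.exp (2*δ) * d^2 ∧ d ≤ Real.exp δ * t := by
  have ht : 0 < t := lt_of_lt_of_le (by positivity) h1
  have hEE : Real.exp δ * Real.exp δ = Real.exp (2*δ) := by rw [← Real.exp_add]; ring_nf
  have hinv : Real.exp δ * Real.exp (-δ) = 1 := by rw [← Real.exp_add]; simp
  have hdle : d ≤ Real.exp δ * t := by
    have h := mul_le_mul_of_nonneg_left h1 (Real.exp_pos δ).le
    calc d = Real.exp δ * (Real.exp (-δ) * d) := by rw [← mul_assoc, hinv, one_mul]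
      _ ≤ Real.exp δ * t := h
  refine ⟨?_, ?_, hdle⟩
  · have hs := mul_le_mul hdle hdle hd.le (by positivity)
    have e3 : (Real.exp δ * t) * (Real.exp δ * t) = Real.exp (2*δ) * t^2 := by
      rw [← hEE]; ring
    nlinarith [hs, e3]
  · have hs := mul_le_mul h2 h2 ht.le (by positivity)
    have e3 : (Real.exp δ * d) * (Real.exp δ * d) = Real.exp (2*δ) * d^2 := by
      rw [← hEE]; ring
    nlinarith [hs, e3]

lemma expProdBound (x y tx ty δ : ℝ) (hx : 0 < x) (hy : 0 < y)
    (h1x : Real.exp (-δ) * x ≤ tx) (h2x : tx ≤ Real.exp δ * x)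
    (h1y : Real.exp (-δ) * y ≤ ty) (h2y : ty ≤ Real.exp δ * y) :
    x*y ≤ Real.exp (2*δ) * (tx*ty) ∧ tx*ty ≤ Real.exp (2*δ) * (x*y) := by
  have htx : 0 < tx := lt_of_lt_of_le (by positivity) h1x
  have hty : 0 < ty := lt_of_lt_of_le (by positivity) h1y
  have hEE : Real.exp δ * Real.exp δ = Real.exp (2*δ) := by rw [← Real.exp_add]; ring_nf
  have hxle := (expSqBound x tx δ hx h1x h2x).2.2
  have hyle := (expSqBound y ty δ hy h1y h2y).2.2
  constructor
  · have hs := mul_le_mul hxle hyle hy.le (by positivity)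
    have e3 : (Real.exp δ * tx) * (Real.exp δ * ty) = Real.exp (2*δ) * (tx*ty) := by
      rw [← hEE]; ring
    nlinarith [hs, e3]
  · have hs := mul_le_mul h2x h2y hty.le (by positivity)
    have e3 : (Real.exp δ * x) * (Real.exp δ * y) = Real.exp (2*δ) * (x*y) := by
      rw [← hEE]; ring
    nlinarith [hs, e3]

lemma step1 (s p q : ℝ) (hs : 0 < s) (hp : 0 < p) (hq : 0 < q)
    (h : s^2*p^2 ≤ q^2) : s*p ≤ q := by
  nlinarith [mul_pos hs hp]

lemma step2 (s p q : ℝ) (hs : 0 < s) (hs1 : s ≤ 1) (hp : 0 < p) (hq : 0 < q)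
    (h : s*p ≤ q) : s^2*p^2 ≤ p*q := by
  nlinarith [mul_le_mul_of_nonneg_right h (mul_nonneg hs.le hp.le),
    mul_le_mul_of_nonneg_left hs1 (mul_nonneg hq.le hp.le)]

lemma step3 (s p q r : ℝ) (hs : 0 < s) (hp : 0 < p) (hq : 0 < q)
    (h1 : s^2*r^2 ≤ p^2) (h2 : s^2*r^2 ≤ q^2) : s^2*r^2 ≤ p*q := by
  have ht : (0:ℝ) ≤ s^2*r^2 := by positivity
  have hsum : (0:ℝ) < s^2*r^2 + p*q := by
    have := mul_pos hp hq; linarith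
  nlinarith [mul_le_mul h1 h2 ht (sq_nonneg p), hsum]

theorem cos_angle_perturbation_bound
    (ε δ : ℝ) (hε : 0 < ε) (hδ : 0 ≤ δ)
    (dij dik djk : ℝ) (hdij : 0 < dij) (hdik : 0 < dik) (hdjk : 0 < djk)
    (htri : dij < dik + djk ∧ dik < dij + djk ∧ djk < dij + dik)
    (hangi : ε ≤ Real.arccos ((dij ^ 2 + dik ^ 2 - djk ^ 2) / (2 * dij * dik)))
    (hangj : ε ≤ Real.arccos ((dij ^ 2 + djk ^ 2 - dik ^ 2) / (2 * dij * djk)))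
    (hangk : ε ≤ Real.arccos ((dik ^ 2 + djk ^ 2 - dij ^ 2) / (2 * dik * djk)))
    (tij tik tjk : ℝ)
    (hij : Real.exp (-δ) * dij ≤ tij ∧ tij ≤ Real.exp δ * dij)
    (hik : Real.exp (-δ) * dik ≤ tik ∧ tik ≤ Real.exp δ * dik)
    (hjk : Real.exp (-δ) * djk ≤ tjk ∧ tjk ≤ Real.exp δ * djk)
    (htri' : tij < tik + tjk ∧ tik < tij + tjk ∧ tjk < tij + tik) :
    |Real.cos (Real.arccos ((dij ^ 2 + dik ^ 2 - djk ^ 2) / (2 * dij * dik))) -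
      Real.cos (Real.arccos ((tij ^ 2 + tik ^ 2 - tjk ^ 2) / (2 * tij * tik)))| ≤
    3 * (Real.exp (4 * δ) - 1) / (2 * Real.sin ε ^ 2) := by
  obtain ⟨ht1, ht2, ht3⟩ := htri
  obtain ⟨hij1, hij2⟩ := hij
  obtain ⟨hik1, hik2⟩ := hik
  obtain ⟨hjk1, hjk2⟩ := hjk
  have htij : 0 < tij := lt_of_lt_of_le (by positivity) hij1
  have htik : 0 < tik := lt_of_lt_of_le (by positivity) hik1
  have htjk : 0 < tjk := lt_of_lt_of_le (by positivity) hjk1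
  -- cosine values are in (-1,1)
  have hci := cosStrict dij dik djk hdij hdik hdjk ht1 ht2 ht3
  have hcj := cosStrict dij djk dik hdij hdjk hdik (by linarith) (by linarith) (by linarith)
  have hck := cosStrict dik djk dij hdik hdjk hdij (by linarith) (by linarith) (by linarith)
  have hci' := cosStrict tij tik tjk htij htik htjk htri'.1 htri'.2.1 htri'.2.2
  -- rewrite cos ∘ arccos
  rw [Real.cos_arccos hci.1.le hci.2.le, Real.cos_arccos hci'.1.le hci'.2.le]
  -- angle bounds give cosine bounds
  have Hcos : ∀ w : ℝ, -1 < w → w < 1 → ε ≤ Real.arccos w → w ≤ Real.cos ε := by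
    intro w hw1 hw2 hw
    have := Real.cos_le_cos_of_nonneg_of_le_pi hε.le (Real.arccos_le_pi w) hw
    rwa [Real.cos_arccos hw1.le hw2.le] at this
  have hcosi := Hcos _ hci.1 hci.2 hangi
  have hcosj := Hcos _ hcj.1 hcj.2 hangj
  have hcosk := Hcos _ hck.1 hck.2 hangk
  have Hi : dij^2 + dik^2 - djk^2 ≤ 2*dij*dik*Real.cos ε := by
    have := (div_le_iff₀ (by positivity : (0:ℝ) < 2*dij*dik)).1 hcosi
    linarith [this]
  have Hj : dij^2 + djk^2 - dik^2 ≤ 2*dij*djk*Real.cos ε := by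
    have := (div_le_iff₀ (by positivity : (0:ℝ) < 2*dij*djk)).1 hcosj
    linarith [this]
  have Hk : dik^2 + djk^2 - dij^2 ≤ 2*dik*djk*Real.cos ε := by
    have := (div_le_iff₀ (by positivity : (0:ℝ) < 2*dik*djk)).1 hcosk
    linarith [this]
  -- ε < Real.pi, so sin ε > 0
  have hεπ : ε < Real.pi := by
    refine lt_of_le_of_lt hangi (lt_of_le_of_ne (Real.arccos_le_pi _) ?_)
    intro h
    exact absurd (Real.arccos_eq_pi.1 h) (not_le.2 hci.1)
  have hs : 0 < Real.sin ε := Real.sin_pos_of_pos_of_lt_pi hε hεπ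
  have hs1 : Real.sin ε ≤ 1 := Real.sin_le_one ε
  have hu1 : Real.cos ε ≤ 1 := Real.cos_le_one ε
  have hsu : Real.sin ε ^ 2 = 1 - Real.cos ε ^ 2 := by
    linarith [Real.sin_sq_add_cos_sq ε]
  have hu0 : 0 ≤ Real.cos ε := by
    by_contra h
    push_neg at h
    nlinarith [Hi, Hk, mul_pos (mul_pos hdij hdik) (neg_pos.2 h),
      mul_pos (mul_pos hdik hdjk) (neg_pos.2 h), sq_nonneg dik]
  -- side ratio bounds
  have R1 : Real.sin ε ^2 * djk^2 ≤ dij^2 :=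
    sideRatio dik dij djk (Real.cos ε) (Real.sin ε) hdik hdij hdjk
      (by linarith) (by linarith) (by linarith) hu0 hu1 hsu
      (by linarith) (by linarith) (by linarith)
  have R2 : Real.sin ε ^2 * djk^2 ≤ dik^2 :=
    sideRatio dij dik djk (Real.cos ε) (Real.sin ε) hdij hdik hdjk
      ht1 ht2 ht3 hu0 hu1 hsu
      (by linarith) (by linarith) (by linarith)
  have R3 : Real.sin ε ^2 * dij^2 ≤ dik^2 :=
    sideRatio djk dik dij (Real.cos ε) (Real.sin ε) hdjk hdik hdij
      (by linarith) (by linarith) (by linarith) hu0 hu1 hsu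
      (by linarith) (by linarith) (by linarith)
  have R4 : Real.sin ε ^2 * dik^2 ≤ dij^2 :=
    sideRatio djk dij dik (Real.cos ε) (Real.sin ε) hdjk hdij hdik
      (by linarith) (by linarith) (by linarith) hu0 hu1 hsu
      (by linarith) (by linarith) (by linarith)
  -- sum bound: (dij²+dik²+djk²) sin²ε ≤ 3 dij dik
  have r3 : Real.sin ε * dij ≤ dik := step1 _ _ _ hs hdij hdik R3
  have r4 : Real.sin ε * dik ≤ dij := step1 _ _ _ hs hdik hdij R4
  have b1 : Real.sin ε ^2 * dij^2 ≤ dij * dik := step2 _ _ _ hs hs1 hdij hdik r3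
  have b2 : Real.sin ε ^2 * dik^2 ≤ dij * dik := by
    have := step2 _ _ _ hs hs1 hdik hdij r4
    linarith [this]
  have b3 : Real.sin ε ^2 * djk^2 ≤ dij * dik := step3 _ _ _ _ hs hdij hdik R1 R2
  have hSsum : (dij^2 + dik^2 + djk^2) * Real.sin ε ^2 ≤ 3 * (dij * dik) := by
    linarith [b1, b2, b3]
  -- perturbation bound
  have hE : (1:ℝ) ≤ Real.exp (2*δ) := Real.one_le_exp (by linarith)
  have hx2 := expSqBound dij tij δ hdij hij1 hij2
  have hy2 := expSqBound dik tik δ hdik hik1 hik2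
  have hz2 := expSqBound djk tjk δ hdjk hjk1 hjk2
  have hxy := expProdBound dij dik tij tik δ hdij hdik hij1 hij2 hik1 hik2
  have hmain := pertBound dij dik djk tij tik tjk (Real.exp (2*δ)) hdij hdik htij htik
    hE ⟨hx2.1, hx2.2.1⟩ ⟨hy2.1, hy2.2.1⟩ ⟨hz2.1, hz2.2.1⟩ hxy
  refine le_trans hmain ?_
  have hE2 : Real.exp (2*δ) ^ 2 = Real.exp (4*δ) := by
    rw [sq, ← Real.exp_add]; ring_nf
  rw [hE2]
  have h40 : (0:ℝ) ≤ Real.exp (4*δ) - 1 :=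
    sub_nonneg.2 (Real.one_le_exp (by linarith))
  rw [div_le_div_iff₀ (by positivity) (by positivity)]
  linarith [mul_le_mul_of_nonneg_left hSsum h40]
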